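/- Let n be a positive integer divisible by 4. For a member L of the family F_n (whose points are indexed by list positions 1, …, n), define the index form of its combinatorial onion layer decomposition as the sequence (I_1, …, I_k) of subsets of {1, …, n}, where I_j is the set of list indices of the points in the j-th layer. Then the number of distinct sequences (I_1, …, I_k) arising as the index form of the combinatorial onion layer decomposition of some member of F_n is at least (n/4)!. In particular, although every member of F_n has the same x-sorted index permutation and the same y-sorted index permutation, the family admits at least (n/4)! distinct combinatorial onion layer decompositions. -/

import Mathlib

/-- The extreme points (vertices) of the convex hull of `Q`: the points `q ∈ Q` that do
not lie in the convex hull of `Q \ {q}`. -/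
def hullVertices (Q : Set (ℝ × ℝ)) : Set (ℝ × ℝ) :=
  {q ∈ Q | q ∉ convexHull ℝ (Q \ {q})}

/-- `L = (S_1, …, S_k)` is a combinatorial onion layer decomposition of `P`. -/
def IsOnionDecomp (P : Set (ℝ × ℝ)) (L : List (Set (ℝ × ℝ))) : Prop :=
  L ≠ [] ∧
  (∀ S ∈ L, S.Nonempty) ∧
  List.Pairwise Disjoint L ∧
  (⋃₀ {S | S ∈ L}) = P ∧
  ∀ i < L.length,
    L.getD i ∅ = hullVertices (P \ ⋃ j ∈ Finset.range i, L.getD j ∅)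

/-- Membership in the family `F_n` (with `n = 4*m`). -/
def InFamilyF (n m : ℕ) (p1 p2 p3 q : Fin m → ℝ × ℝ) : Prop :=
  (∀ i, p1 i ∈ openSegment ℝ
      (((-2 : ℝ), (-2 * (n : ℝ) - 6)))
      (((0 : ℝ), (-2 * (n : ℝ) - 4)))) ∧
  StrictMono (fun i => (p1 i).1) ∧
  (∀ i, p2 i ∈ openSegment ℝ (((0 : ℝ), (0 : ℝ))) (((2 : ℝ), (-2 : ℝ)))) ∧
  StrictMono (fun i => (p2 i).1) ∧
  (∀ i, p3 i ∈ openSegment ℝ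
      ((2 * (n : ℝ) + 2, -2 * (n : ℝ) - 2))
      ((2 * (n : ℝ) + 4, -2 * (n : ℝ) - 4))) ∧
  StrictMono (fun i => (p3 i).1) ∧
  (∀ i : Fin m, q i ∈ openSegment ℝ
      ((2 * ((i : ℕ) + 1 : ℝ) + 1, -(2 * ((i : ℕ) + 1 : ℝ)) - 1))
      ((2 * ((i : ℕ) + 1 : ℝ) + 2, -(2 * ((i : ℕ) + 1 : ℝ)))))

/-- The list of all `n = 4m` points of a member of `F_n`, in list order `P₁, P₂, P₃, Q`. -/
def familyFList (m : ℕ) (p1 p2 p3 q : Fin m → ℝ × ℝ) : List (ℝ × ℝ) :=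
  List.ofFn p1 ++ List.ofFn p2 ++ List.ofFn p3 ++ List.ofFn q

/-- The index form of an onion layer decomposition `L` of (the point set of) a point
list: each layer is replaced by the set of list positions of its points. -/
def indexForm (m : ℕ) (p1 p2 p3 q : Fin m → ℝ × ℝ) (L : List (Set (ℝ × ℝ))) :
    List (Set ℕ) :=
  L.map (fun S =>
    {idx : ℕ | idx < 4 * m ∧ (familyFList m p1 p2 p3 q).getD idx ((0 : ℝ), (0 : ℝ)) ∈ S})

namespace OnionAux

/-! ### Generic convexity helpers -/

lemma lin_map (α β : ℝ) : IsLinearMap ℝ (fun p : ℝ × ℝ => α * p.1 + β * p.2) := by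
  constructor
  · intro p q; simp [Prod.fst_add, Prod.snd_add]; ring
  · intro c p; simp [Prod.smul_fst, Prod.smul_snd, smul_eq_mul]; ring

lemma not_mem_hull {S : Set (ℝ × ℝ)} (α β : ℝ) (v : ℝ × ℝ)
    (hS : ∀ p ∈ S, α * p.1 + β * p.2 < α * v.1 + β * v.2) :
    v ∉ convexHull ℝ S := by
  intro h
  have hsub : S ⊆ {w : ℝ × ℝ | α * w.1 + β * w.2 < α * v.1 + β * v.2} :=
    fun p hp => hS p hp
  have hcvx : Convex ℝ {w : ℝ × ℝ | α * w.1 + β * w.2 < α * v.1 + β * v.2} :=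
    convex_halfSpace_lt (lin_map α β) (α * v.1 + β * v.2)
  have h2 := convexHull_min hsub hcvx h
  simp only [Set.mem_setOf_eq] at h2
  exact lt_irrefl _ h2

lemma mem_seg (x y p : ℝ × ℝ) (θ : ℝ) (h0 : 0 ≤ θ) (h1 : θ ≤ 1)
    (hx : p.1 = (1 - θ) * x.1 + θ * y.1) (hy : p.2 = (1 - θ) * x.2 + θ * y.2) :
    p ∈ segment ℝ x y := by
  refine ⟨1 - θ, θ, by linarith, h0, by ring, ?_⟩
  apply Prod.ext <;> simp [Prod.smul_fst, Prod.smul_snd, smul_eq_mul]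
  · exact hx.symm
  · exact hy.symm

lemma seg_mem_hull {S : Set (ℝ × ℝ)} {x y p : ℝ × ℝ} (hx : x ∈ S) (hy : y ∈ S)
    (hp : p ∈ segment ℝ x y) : p ∈ convexHull ℝ S :=
  segment_subset_convexHull hx hy hp

lemma seg_mem_hull' {S : Set (ℝ × ℝ)} {x w p : ℝ × ℝ} (hx : x ∈ S)
    (hw : w ∈ convexHull ℝ S) (hp : p ∈ segment ℝ x w) : p ∈ convexHull ℝ S :=
  (convex_convexHull ℝ S).segment_subset (subset_convexHull ℝ S hx) hw hp

/-! ### The construction -/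

noncomputable def tp (m : ℕ) (k : Fin m) : ℝ := ((k : ℕ) + 1) / ((m : ℕ) + 1)

noncomputable def eps (m : ℕ) : ℝ := 1 / (2 * (m : ℝ) + 4)

noncomputable def pa (m : ℕ) (k : Fin m) : ℝ × ℝ :=
  (-2 + 2 * tp m k, -(8 * (m : ℝ)) - 6 + 2 * tp m k)
noncomputable def pb (m : ℕ) (k : Fin m) : ℝ × ℝ := (2 * tp m k, -(2 * tp m k))
noncomputable def pc (m : ℕ) (k : Fin m) : ℝ × ℝ :=
  (8 * (m : ℝ) + 2 + 2 * tp m k, -(8 * (m : ℝ)) - 2 - 2 * tp m k)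
noncomputable def sq (m : ℕ) (σ : Equiv.Perm (Fin m)) (k : Fin m) : ℝ :=
  eps m ^ ((σ k : ℕ) + 1)
noncomputable def pq (m : ℕ) (σ : Equiv.Perm (Fin m)) (k : Fin m) : ℝ × ℝ :=
  (2 * ((k : ℕ) + 1 : ℝ) + 1 + sq m σ k, -(2 * ((k : ℕ) + 1 : ℝ)) - 1 + sq m σ k)

section Bounds
variable {m : ℕ} (σ : Equiv.Perm (Fin m)) (k k' : Fin m)

lemma mp : (0 : ℝ) < (m : ℝ) + 1 := by positivity

lemma tp_pos : 0 < tp m k := by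
  have := mp (m := m); have : (0:ℝ) ≤ (k:ℕ) := Nat.cast_nonneg _
  unfold tp; positivity

lemma tp_lt_one : tp m k < 1 := by
  have h := k.isLt
  have h2 : ((k : ℕ) : ℝ) < (m : ℝ) := by exact_mod_cast h
  rw [tp, div_lt_one (mp (m := m))]; linarith

lemma tp_lt_tp (h : (k : ℕ) < (k' : ℕ)) : tp m k < tp m k' := by
  have h2 : ((k : ℕ) : ℝ) < ((k' : ℕ) : ℝ) := by exact_mod_cast h
  have hd := mp (m := m)
  rw [tp, tp, div_lt_div_iff₀ hd hd]; nlinarith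

lemma eps_pos : (0 : ℝ) < eps m := by unfold eps; positivity

lemma eps_lt_one : eps m < 1 := by
  rw [eps, div_lt_one (by positivity)]
  have : (0:ℝ) ≤ (m:ℝ) := Nat.cast_nonneg _
  linarith

lemma eps_mul : eps m * (2 * (m : ℝ) + 4) = 1 := by
  rw [eps]; field_simp

lemma sq_pos : 0 < sq m σ k := pow_pos eps_pos _

lemma sq_le_eps : sq m σ k ≤ eps m := by
  have h1 := eps_pos (m := m); have h2 := eps_lt_one (m := m)
  calc sq m σ k = eps m ^ ((σ k : ℕ) + 1) := rfl
    _ ≤ eps m ^ 1 := pow_le_pow_of_le_one (le_of_lt h1) (le_of_lt h2) (by omega)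
    _ = eps m := pow_one _

lemma sq_lt_one : sq m σ k < 1 := lt_of_le_of_lt (sq_le_eps σ k) eps_lt_one

lemma sq_lt_sq (h : (σ k : ℕ) < (σ k' : ℕ)) : sq m σ k' < sq m σ k :=
  pow_lt_pow_right_of_lt_one₀ eps_pos eps_lt_one (by omega)

-- x-coordinate bounds
lemma pa_x_lt : (pa m k).1 < 0 := by
  have := tp_lt_one (m := m) k; show -2 + 2 * tp m k < 0; linarith
lemma pa_x_gt : -2 < (pa m k).1 := by
  have := tp_pos (m := m) k; show -2 < -2 + 2 * tp m k; linarith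
lemma pb_x_pos : 0 < (pb m k).1 := by
  have := tp_pos (m := m) k; show 0 < 2 * tp m k; linarith
lemma pb_x_lt : (pb m k).1 < 2 := by
  have := tp_lt_one (m := m) k; show 2 * tp m k < 2; linarith
lemma pq_x_gt : 2 * ((k : ℕ) + 1 : ℝ) + 1 < (pq m σ k).1 := by
  have := sq_pos σ k
  show 2 * ((k : ℕ) + 1 : ℝ) + 1 < 2 * ((k : ℕ) + 1 : ℝ) + 1 + sq m σ k; linarith
lemma pq_x_ge3 : 3 < (pq m σ k).1 := by
  have h := pq_x_gt σ k
  have : (0:ℝ) ≤ ((k:ℕ):ℝ) := Nat.cast_nonneg _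
  linarith
lemma pq_x_lt : (pq m σ k).1 < 2 * (m : ℝ) + 3 := by
  have h := sq_lt_one σ k
  have hk : ((k : ℕ) : ℝ) ≤ (m : ℝ) - 1 := by
    have := k.isLt
    have : ((k:ℕ):ℝ) < (m:ℝ) := by exact_mod_cast k.isLt
    have : ((k:ℕ):ℝ) + 1 ≤ (m:ℝ) := by
      have h2 : (k:ℕ) + 1 ≤ m := k.isLt
      exact_mod_cast h2
    linarith
  show 2 * ((k : ℕ) + 1 : ℝ) + 1 + sq m σ k < 2 * (m : ℝ) + 3
  linarith
lemma pq_x_lt_step : (pq m σ k).1 < 2 * ((k : ℕ) + 1 : ℝ) + 2 := by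
  have h := sq_lt_one σ k
  show 2 * ((k : ℕ) + 1 : ℝ) + 1 + sq m σ k < 2 * ((k : ℕ) + 1 : ℝ) + 2; linarith
lemma pc_x_gt : 8 * (m : ℝ) + 2 < (pc m k).1 := by
  have := tp_pos (m := m) k
  show 8 * (m : ℝ) + 2 < 8 * (m : ℝ) + 2 + 2 * tp m k; linarith

lemma pq_x_mono (h : (k : ℕ) < (k' : ℕ)) : (pq m σ k).1 < (pq m σ k').1 := by
  have h1 := pq_x_lt_step σ k
  have h2 := pq_x_gt σ k'
  have : ((k:ℕ):ℝ) + 1 ≤ ((k':ℕ):ℝ) := by exact_mod_cast h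
  linarith

-- injectivity and cross-family distinctness
lemma pa_inj (h : pa m k = pa m k') : k = k' := by
  by_contra hne
  have : (k : ℕ) ≠ (k' : ℕ) := fun hh => hne (Fin.ext hh)
  rcases this.lt_or_gt with hlt | hlt
  · have := tp_lt_tp k k' hlt
    have hx : (pa m k).1 = (pa m k').1 := congrArg Prod.fst h
    have : (-2 + 2 * tp m k) = (-2 + 2 * tp m k') := hx
    linarith
  · have := tp_lt_tp k' k hlt
    have hx : (pa m k).1 = (pa m k').1 := congrArg Prod.fst h
    have : (-2 + 2 * tp m k) = (-2 + 2 * tp m k') := hx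
    linarith

lemma pb_inj (h : pb m k = pb m k') : k = k' := by
  by_contra hne
  have : (k : ℕ) ≠ (k' : ℕ) := fun hh => hne (Fin.ext hh)
  rcases this.lt_or_gt with hlt | hlt <;>
  · first
    | (have := tp_lt_tp (m := m) k k' hlt; have hx : (2 * tp m k : ℝ) = 2 * tp m k' := congrArg Prod.fst h; linarith)
    | (have := tp_lt_tp (m := m) k' k hlt; have hx : (2 * tp m k : ℝ) = 2 * tp m k' := congrArg Prod.fst h; linarith)

lemma pc_inj (h : pc m k = pc m k') : k = k' := by
  by_contra hne
  have : (k : ℕ) ≠ (k' : ℕ) := fun hh => hne (Fin.ext hh)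
  rcases this.lt_or_gt with hlt | hlt <;>
  · first
    | (have := tp_lt_tp (m := m) k k' hlt
       have hx : (8 * (m:ℝ) + 2 + 2 * tp m k) = 8 * (m:ℝ) + 2 + 2 * tp m k' := congrArg Prod.fst h
       linarith)
    | (have := tp_lt_tp (m := m) k' k hlt
       have hx : (8 * (m:ℝ) + 2 + 2 * tp m k) = 8 * (m:ℝ) + 2 + 2 * tp m k' := congrArg Prod.fst h
       linarith)

lemma pq_inj (h : pq m σ k = pq m σ k') : k = k' := by
  by_contra hne
  have : (k : ℕ) ≠ (k' : ℕ) := fun hh => hne (Fin.ext hh)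
  have hx : (pq m σ k).1 = (pq m σ k').1 := congrArg Prod.fst h
  rcases this.lt_or_gt with hlt | hlt
  · exact absurd hx (ne_of_lt (pq_x_mono σ k k' hlt))
  · exact absurd hx.symm (ne_of_lt (pq_x_mono σ k' k hlt))

lemma m_one_le (hm : 0 < m) : (1 : ℝ) ≤ (m : ℝ) := by exact_mod_cast hm

lemma pa_ne_pb : pa m k ≠ pb m k' := fun h => by
  have hx : (pa m k).1 = (pb m k').1 := congrArg Prod.fst h
  have := pa_x_lt (m := m) k; have := pb_x_pos (m := m) k'; linarith
lemma pa_ne_pc : pa m k ≠ pc m k' := fun h => by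
  have hx : (pa m k).1 = (pc m k').1 := congrArg Prod.fst h
  have := pa_x_lt (m := m) k; have := pc_x_gt (m := m) k'
  have : (0:ℝ) ≤ (m:ℝ) := Nat.cast_nonneg _; linarith
lemma pa_ne_pq : pa m k ≠ pq m σ k' := fun h => by
  have hx : (pa m k).1 = (pq m σ k').1 := congrArg Prod.fst h
  have := pa_x_lt (m := m) k; have := pq_x_ge3 σ k'; linarith
lemma pb_ne_pc : pb m k ≠ pc m k' := fun h => by
  have hx : (pb m k).1 = (pc m k').1 := congrArg Prod.fst h
  have := pb_x_lt (m := m) k; have := pc_x_gt (m := m) k'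
  have : (0:ℝ) ≤ (m:ℝ) := Nat.cast_nonneg _; linarith
lemma pb_ne_pq : pb m k ≠ pq m σ k' := fun h => by
  have hx : (pb m k).1 = (pq m σ k').1 := congrArg Prod.fst h
  have := pb_x_lt (m := m) k; have := pq_x_ge3 σ k'; linarith
lemma pc_ne_pq : pc m k ≠ pq m σ k' := fun h => by
  have hx : (pc m k).1 = (pq m σ k').1 := congrArg Prod.fst h
  have := pc_x_gt (m := m) k; have := pq_x_lt σ k'
  have hm : (1:ℝ) ≤ (m:ℝ) := by exact_mod_cast k.pos
  linarith

end Bounds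

/-! ### Layers and remaining sets -/

def lay (m : ℕ) (σ : Equiv.Perm (Fin m)) (j : Fin m) : Set (ℝ × ℝ) :=
  {pa m j, pb m j, pc m j.rev, pq m σ (σ.symm j)}

def Rem (m : ℕ) (σ : Equiv.Perm (Fin m)) (j : ℕ) : Set (ℝ × ℝ) :=
  (pa m '' {k | j ≤ (k : ℕ)}) ∪ (pb m '' {k | j ≤ (k : ℕ)}) ∪
  (pc m '' {k | (k : ℕ) + j < m}) ∪ (pq m σ '' {k | j ≤ (σ k : ℕ)})

section Layers
variable {m : ℕ} (σ : Equiv.Perm (Fin m))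

lemma pa_mem_Rem {j : ℕ} {k : Fin m} (h : j ≤ (k : ℕ)) : pa m k ∈ Rem m σ j :=
  Or.inl (Or.inl (Or.inl ⟨k, h, rfl⟩))
lemma pb_mem_Rem {j : ℕ} {k : Fin m} (h : j ≤ (k : ℕ)) : pb m k ∈ Rem m σ j :=
  Or.inl (Or.inl (Or.inr ⟨k, h, rfl⟩))
lemma pc_mem_Rem {j : ℕ} {k : Fin m} (h : (k : ℕ) + j < m) : pc m k ∈ Rem m σ j :=
  Or.inl (Or.inr ⟨k, h, rfl⟩)
lemma pq_mem_Rem {j : ℕ} {k : Fin m} (h : j ≤ (σ k : ℕ)) : pq m σ k ∈ Rem m σ j :=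
  Or.inr ⟨k, h, rfl⟩

/-- three-point convex combinations lie in the hull -/
lemma mem_tri {S : Set (ℝ × ℝ)} {b c t p : ℝ × ℝ} (hb : b ∈ S) (hc : c ∈ S)
    (ht : t ∈ S) (l u v : ℝ) (hl : 0 ≤ l) (hu : 0 ≤ u) (hv : 0 ≤ v)
    (hs : l + u + v = 1)
    (hx : p.1 = l * b.1 + u * c.1 + v * t.1)
    (hy : p.2 = l * b.2 + u * c.2 + v * t.2) : p ∈ convexHull ℝ S := by
  by_cases hlu : l + u = 0
  · have hl0 : l = 0 := by linarith
    have hu0 : u = 0 := by linarith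
    have hv1 : v = 1 := by linarith
    have : p = t := by
      apply Prod.ext
      · rw [hx, hl0, hu0, hv1]; ring
      · rw [hy, hl0, hu0, hv1]; ring
    rw [this]; exact subset_convexHull ℝ S ht
  · have hlu' : 0 < l + u := lt_of_le_of_ne (by linarith) (Ne.symm hlu)
    set z : ℝ × ℝ := ((l / (l + u)) * b.1 + (u / (l + u)) * c.1,
                      (l / (l + u)) * b.2 + (u / (l + u)) * c.2) with hz
    have hzseg : z ∈ segment ℝ b c := by
      apply mem_seg b c z (u / (l + u)) (by positivity)
        (by rw [div_le_one hlu']; linarith)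
      · show z.1 = _; rw [hz]; field_simp; try ring
      · show z.2 = _; rw [hz]; field_simp; try ring
    have hzh : z ∈ convexHull ℝ S := seg_mem_hull hb hc hzseg
    apply seg_mem_hull' ht hzh
    apply mem_seg t z p (l + u) (le_of_lt hlu') (by linarith)
    · rw [hx]; show _ = (1 - (l+u)) * t.1 + (l+u) * z.1
      rw [hz]
      have hv' : v = 1 - l - u := by linarith
      rw [hv']; field_simp; ring
    · rw [hy]; show _ = (1 - (l+u)) * t.2 + (l+u) * z.2
      rw [hz]
      have hv' : v = 1 - l - u := by linarith
      rw [hv']; field_simp; ring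

/-! ### Non-vertex points are in the hull of the rest -/

-- chain B or C point strictly between pb j and pc (j.rev) on the line y = -x
lemma mid_line_mem {j : Fin m} {p : ℝ × ℝ} {S : Set (ℝ × ℝ)}
    (hbS : pb m j ∈ S) (hcS : pc m j.rev ∈ S)
    (hpy : p.2 = -p.1) (h1 : (pb m j).1 ≤ p.1) (h2 : p.1 ≤ (pc m j.rev).1) :
    p ∈ convexHull ℝ S := by
  have hlt : (pb m j).1 < (pc m j.rev).1 := by
    have := pb_x_lt (m := m) j; have := pc_x_gt (m := m) j.rev
    have hm : (1:ℝ) ≤ (m:ℝ) := by exact_mod_cast j.pos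
    linarith
  set xb := (pb m j).1 with hxb; set xc := (pc m j.rev).1 with hxc
  apply seg_mem_hull hbS hcS
  set θ := (p.1 - xb) / (xc - xb) with hθ
  have hne : xc - xb ≠ 0 := by linarith
  have key : θ * (xc - xb) = p.1 - xb := div_mul_cancel₀ _ hne
  have hxid : (1 - θ) * xb + θ * xc = p.1 := by nlinarith [key]
  have hby : (pb m j).2 = -xb := rfl
  have hcy' : (pc m j.rev).2 = -xc := by
    show -(8 * (m : ℝ)) - 2 - 2 * tp m j.rev = -(8 * (m:ℝ) + 2 + 2 * tp m j.rev); ring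
  refine mem_seg _ _ _ θ (div_nonneg (by linarith) (by linarith))
    (by rw [hθ, div_le_one (by linarith)]; linarith) ?_ ?_
  · rw [← hxb, ← hxc]; exact hxid.symm
  · rw [hpy, hby, hcy']; linarith [hxid]

lemma pc_x_lt {k : Fin m} : (pc m k).1 < 8 * (m:ℝ) + 4 := by
  have := tp_lt_one (m := m) k
  show 8 * (m : ℝ) + 2 + 2 * tp m k < 8 * (m:ℝ) + 4; linarith

lemma seg_on_line {x y p : ℝ × ℝ} (s C : ℝ) (hx : x.2 = s * x.1 + C)
    (hy : y.2 = s * y.1 + C) (hp : p.2 = s * p.1 + C)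
    (h1 : x.1 ≤ p.1) (h2 : p.1 ≤ y.1) (hlt : x.1 < y.1) : p ∈ segment ℝ x y := by
  set θ := (p.1 - x.1) / (y.1 - x.1) with hθ
  have hne : y.1 - x.1 ≠ 0 := by linarith
  have key : θ * (y.1 - x.1) = p.1 - x.1 := div_mul_cancel₀ _ hne
  apply mem_seg _ _ _ θ (div_nonneg (by linarith) (by linarith))
    (by rw [hθ, div_le_one (by linarith)]; linarith)
  · nlinarith [key]
  · rw [hx, hy, hp]
    have key2 : s * (θ * (y.1 - x.1)) = s * (p.1 - x.1) := by rw [key]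
    nlinarith [key2]

-- the auxiliary point w on the baseline
lemma w_mem_hull {j : Fin m} {S : Set (ℝ × ℝ)}
    (hbS : pb m j ∈ S) (hcS : pc m j.rev ∈ S) :
    ((4*(m:ℝ)+2, -(4*(m:ℝ)+2)) : ℝ × ℝ) ∈ convexHull ℝ S := by
  have hm : (1:ℝ) ≤ (m:ℝ) := by exact_mod_cast j.pos
  refine mid_line_mem hbS hcS rfl ?_ ?_
  · have h := pb_x_lt (m := m) j
    show (pb m j).1 ≤ (4*(m:ℝ)+2 : ℝ); linarith
  · have h := pc_x_gt (m := m) j.rev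
    show (4*(m:ℝ)+2 : ℝ) ≤ (pc m j.rev).1; linarith

lemma nonvert_a {j k : Fin m} (hjk : (j:ℕ) < (k:ℕ)) :
    pa m k ∈ convexHull ℝ (Rem m σ j \ {pa m k}) := by
  have hm : (1:ℝ) ≤ (m:ℝ) := by exact_mod_cast j.pos
  have hrev : ((j.rev : ℕ) + j < m) := by
    have := j.isLt; rw [Fin.val_rev]; omega
  have hbS : pb m j ∈ Rem m σ j \ {pa m k} :=
    ⟨pb_mem_Rem σ le_rfl, fun h => (pa_ne_pb k j) (Set.mem_singleton_iff.1 h).symm⟩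
  have hcS : pc m j.rev ∈ Rem m σ j \ {pa m k} :=
    ⟨pc_mem_Rem σ hrev, fun h => (pa_ne_pc k j.rev) (Set.mem_singleton_iff.1 h).symm⟩
  have haS : pa m j ∈ Rem m σ j \ {pa m k} :=
    ⟨pa_mem_Rem σ le_rfl, fun h => (by omega : (j:ℕ) ≠ (k:ℕ))
      (congrArg Fin.val (pa_inj j k (Set.mem_singleton_iff.1 h)))⟩
  apply seg_mem_hull' haS (w_mem_hull hbS hcS)
  apply seg_on_line 1 (-(8*(m:ℝ)+4))
  · show -(8 * (m : ℝ)) - 6 + 2 * tp m j = 1 * (-2 + 2 * tp m j) + -(8*(m:ℝ)+4); ring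
  · show (-(4*(m:ℝ)+2) : ℝ) = 1 * (4*(m:ℝ)+2) + -(8*(m:ℝ)+4); ring
  · show -(8 * (m : ℝ)) - 6 + 2 * tp m k = 1 * (-2 + 2 * tp m k) + -(8*(m:ℝ)+4); ring
  · have h1 := tp_lt_tp (m := m) j k hjk
    show (-2 + 2 * tp m j : ℝ) ≤ -2 + 2 * tp m k; linarith
  · have := tp_lt_one (m := m) k
    show (-2 + 2 * tp m k : ℝ) ≤ 4*(m:ℝ)+2; linarith
  · have := tp_pos (m := m) j; have := tp_lt_one (m := m) j
    show (-2 + 2 * tp m j : ℝ) < 4*(m:ℝ)+2; linarith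

lemma nonvert_b {j k : Fin m} (hjk : (j:ℕ) < (k:ℕ)) :
    pb m k ∈ convexHull ℝ (Rem m σ j \ {pb m k}) := by
  have hrev : ((j.rev : ℕ) + j < m) := by
    have := j.isLt; rw [Fin.val_rev]; omega
  have hbS : pb m j ∈ Rem m σ j \ {pb m k} :=
    ⟨pb_mem_Rem σ le_rfl, fun h => (by omega : (j:ℕ) ≠ (k:ℕ))
      (congrArg Fin.val (pb_inj j k (Set.mem_singleton_iff.1 h)))⟩
  have hcS : pc m j.rev ∈ Rem m σ j \ {pb m k} :=
    ⟨pc_mem_Rem σ hrev, fun h => (pb_ne_pc k j.rev) (Set.mem_singleton_iff.1 h).symm⟩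
  refine mid_line_mem hbS hcS ?_ ?_ ?_
  · show -(2 * tp m k) = -(2 * tp m k); rfl
  · have := tp_lt_tp (m := m) j k hjk
    show (2 * tp m j : ℝ) ≤ 2 * tp m k; linarith
  · have := pb_x_lt (m := m) k; have := pc_x_gt (m := m) j.rev
    have hm : (1:ℝ) ≤ (m:ℝ) := by exact_mod_cast j.pos
    show (pb m k).1 ≤ (pc m j.rev).1; linarith

lemma nonvert_c {j k : Fin m} (hk : (k : ℕ) < (j.rev : ℕ)) :
    pc m k ∈ convexHull ℝ (Rem m σ j \ {pc m k}) := by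
  have hrev : ((j.rev : ℕ) + j < m) := by
    have := j.isLt; rw [Fin.val_rev]; omega
  have hbS : pb m j ∈ Rem m σ j \ {pc m k} :=
    ⟨pb_mem_Rem σ le_rfl, fun h => (pb_ne_pc j k) (Set.mem_singleton_iff.1 h)⟩
  have hcS : pc m j.rev ∈ Rem m σ j \ {pc m k} :=
    ⟨pc_mem_Rem σ hrev, fun h => (by omega : ((j.rev:ℕ) : ℕ) ≠ (k:ℕ))
      (congrArg Fin.val (pc_inj j.rev k (Set.mem_singleton_iff.1 h)))⟩
  refine mid_line_mem hbS hcS ?_ ?_ ?_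
  · show -(8 * (m:ℝ)) - 2 - 2 * tp m k = -(8 * (m:ℝ) + 2 + 2 * tp m k); ring
  · have := pb_x_lt (m := m) j; have := pc_x_gt (m := m) k
    have hm : (1:ℝ) ≤ (m:ℝ) := by exact_mod_cast j.pos
    show (pb m j).1 ≤ (pc m k).1; linarith
  · have := tp_lt_tp (m := m) k j.rev hk
    show (8 * (m:ℝ) + 2 + 2 * tp m k) ≤ 8 * (m:ℝ) + 2 + 2 * tp m j.rev; linarith

set_option maxHeartbeats 1000000 in
lemma nonvert_q {j k : Fin m} (hjk : (j : ℕ) < (σ k : ℕ)) :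
    pq m σ k ∈ convexHull ℝ (Rem m σ j \ {pq m σ k}) := by
  have hm : (1:ℝ) ≤ (m:ℝ) := by exact_mod_cast j.pos
  have hrev : ((j.rev : ℕ) + j < m) := by
    have := j.isLt; rw [Fin.val_rev]; omega
  have htop : σ (σ.symm j) = j := Equiv.apply_symm_apply σ j
  have hktop : σ.symm j ≠ k := by
    intro h; rw [← h, htop] at hjk; omega
  have hbS : pb m j ∈ Rem m σ j \ {pq m σ k} :=
    ⟨pb_mem_Rem σ le_rfl, fun h => (pb_ne_pq σ j k) (Set.mem_singleton_iff.1 h)⟩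
  have hcS : pc m j.rev ∈ Rem m σ j \ {pq m σ k} :=
    ⟨pc_mem_Rem σ hrev, fun h => (pc_ne_pq σ j.rev k) (Set.mem_singleton_iff.1 h)⟩
  have htS : pq m σ (σ.symm j) ∈ Rem m σ j \ {pq m σ k} :=
    ⟨pq_mem_Rem σ (by rw [htop]), fun h => hktop (pq_inj σ _ _ (Set.mem_singleton_iff.1 h))⟩
  -- abbreviations
  set st := sq m σ (σ.symm j) with hst
  set sk := sq m σ k with hsk
  have hst_pos : 0 < st := sq_pos σ _
  have hsk_pos : 0 < sk := sq_pos σ _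
  have heps_pos := eps_pos (m := m)
  have heps_lt := eps_lt_one (m := m)
  have hemul := eps_mul (m := m)
  have hsts : st = eps m ^ ((j : ℕ) + 1) := by rw [hst, sq, htop]
  have hsk_le : sk ≤ eps m * st := by
    rw [hsk, sq, hsts, ← pow_succ']
    exact pow_le_pow_of_le_one heps_pos.le heps_lt.le (by omega)
  set δ := sk / st with hδ
  have hδ_pos : 0 < δ := div_pos hsk_pos hst_pos
  have hδ_eps : δ ≤ eps m := by rw [hδ, div_le_iff₀ hst_pos]; linarith [hsk_le]
  have hδ_lt : δ < 1 := lt_of_le_of_lt hδ_eps heps_lt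
  have hkey2 : δ * st = sk := div_mul_cancel₀ _ (ne_of_gt hst_pos)
  set xb := (pb m j).1 with hxb
  set xc := (pc m j.rev).1 with hxc
  set xt := (pq m σ (σ.symm j)).1 with hxt
  set xk := (pq m σ k).1 with hxk
  have hxb0 : 0 < xb := pb_x_pos j
  have hxb2 : xb < 2 := pb_x_lt j
  have hxc1 : 8*(m:ℝ)+2 < xc := pc_x_gt j.rev
  have hxc2 : xc < 8*(m:ℝ)+4 := pc_x_lt
  have hxt3 : 3 < xt := pq_x_ge3 σ _
  have hxt2 : xt < 2*(m:ℝ)+3 := pq_x_lt σ _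
  have hxk3 : 3 < xk := pq_x_ge3 σ _
  have hxk2 : xk < 2*(m:ℝ)+3 := pq_x_lt σ _
  have hp1 : δ * xt ≤ eps m * (2*(m:ℝ)+3) :=
    mul_le_mul hδ_eps hxt2.le (by linarith) heps_pos.le
  have hp3 : δ * xc ≤ eps m * (8*(m:ℝ)+4) :=
    mul_le_mul hδ_eps hxc2.le (by linarith) heps_pos.le
  have hδxb : δ * xb ≤ eps m * 2 := mul_le_mul hδ_eps hxb2.le hxb0.le heps_pos.le
  have hδxb0 : 0 < δ * xb := mul_pos hδ_pos hxb0
  have hδxt0 : 0 < δ * xt := mul_pos hδ_pos (by linarith)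
  have hDen : 0 < (1 - δ) * (xc - xb) := mul_pos (by linarith) (by linarith)
  set τ := (xk - δ * xt - (1 - δ) * xb) / ((1 - δ) * (xc - xb)) with hτ
  have hτkey : τ * ((1 - δ) * (xc - xb)) = xk - δ * xt - (1 - δ) * xb :=
    div_mul_cancel₀ _ (ne_of_gt hDen)
  have hnum0 : 0 ≤ xk - δ * xt - (1 - δ) * xb := by nlinarith
  have hτ0 : 0 ≤ τ := div_nonneg hnum0 hDen.le
  have hτ1 : τ ≤ 1 := by
    rw [hτ, div_le_one hDen]; nlinarith
  apply mem_tri hbS hcS htS ((1-δ)*(1-τ)) ((1-δ)*τ) δ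
    (mul_nonneg (by linarith) (by linarith)) (mul_nonneg (by linarith) hτ0)
    hδ_pos.le (by ring)
  · show xk = (1-δ)*(1-τ) * xb + (1-δ)*τ * xc + δ * xt
    linarith [hτkey]
  · have hyb : (pb m j).2 = -xb := rfl
    have hyc : (pc m j.rev).2 = -xc := by
      show -(8 * (m:ℝ)) - 2 - 2 * tp m j.rev = -(8 * (m:ℝ) + 2 + 2 * tp m j.rev); ring
    have hyt : (pq m σ (σ.symm j)).2 = 2 * st - xt := by
      show -(2 * (((σ.symm j : Fin m) : ℕ) + 1 : ℝ)) - 1 + st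
          = 2 * st - (2 * (((σ.symm j : Fin m) : ℕ) + 1 : ℝ) + 1 + st); ring
    have hyk : (pq m σ k).2 = 2 * sk - xk := by
      show -(2 * ((k : ℕ) + 1 : ℝ)) - 1 + sk = 2 * sk - (2 * ((k : ℕ) + 1 : ℝ) + 1 + sk); ring
    rw [hyb, hyc, hyt, hyk]
    linarith [hτkey, hkey2]


/-! ### The four extreme points of each layer -/

lemma vert_a (j : Fin m) : pa m j ∉ convexHull ℝ (Rem m σ (j : ℕ) \ {pa m j}) := by
  apply not_mem_hull (-1) (-1)
  rintro p ⟨hp, hne⟩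
  rw [Set.mem_singleton_iff] at hne
  have htj1 := tp_lt_one (m := m) j
  have htj0 := tp_pos (m := m) j
  rcases hp with ((⟨k, hk, rfl⟩ | ⟨k, hk, rfl⟩) | ⟨k, hk, rfl⟩) | ⟨k, hk, rfl⟩
  · have hkj : (j : ℕ) < (k : ℕ) :=
      lt_of_le_of_ne hk (fun h => hne (congrArg (pa m) (Fin.ext h.symm)))
    have := tp_lt_tp (m := m) j k hkj
    show -1 * (-2 + 2 * tp m k) + -1 * (-(8*(m:ℝ)) - 6 + 2 * tp m k)
        < -1 * (-2 + 2 * tp m j) + -1 * (-(8*(m:ℝ)) - 6 + 2 * tp m j)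
    linarith
  · have := tp_pos (m := m) k; have := tp_lt_one (m := m) k
    show -1 * (2 * tp m k) + -1 * (-(2 * tp m k))
        < -1 * (-2 + 2 * tp m j) + -1 * (-(8*(m:ℝ)) - 6 + 2 * tp m j)
    have hm0 : (0:ℝ) ≤ (m:ℝ) := Nat.cast_nonneg _
    linarith
  · have := tp_pos (m := m) k; have := tp_lt_one (m := m) k
    show -1 * (8*(m:ℝ) + 2 + 2 * tp m k) + -1 * (-(8*(m:ℝ)) - 2 - 2 * tp m k)
        < -1 * (-2 + 2 * tp m j) + -1 * (-(8*(m:ℝ)) - 6 + 2 * tp m j)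
    have hm0 : (0:ℝ) ≤ (m:ℝ) := Nat.cast_nonneg _
    linarith
  · have := sq_pos σ k; have := sq_lt_one σ k
    show -1 * (2 * ((k:ℕ) + 1 : ℝ) + 1 + sq m σ k) + -1 * (-(2 * ((k:ℕ) + 1 : ℝ)) - 1 + sq m σ k)
        < -1 * (-2 + 2 * tp m j) + -1 * (-(8*(m:ℝ)) - 6 + 2 * tp m j)
    have hm0 : (0:ℝ) ≤ (m:ℝ) := Nat.cast_nonneg _
    linarith

lemma vert_b (j : Fin m) : pb m j ∉ convexHull ℝ (Rem m σ (j : ℕ) \ {pb m j}) := by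
  apply not_mem_hull 0 1
  rintro p ⟨hp, hne⟩
  rw [Set.mem_singleton_iff] at hne
  have htj1 := tp_lt_one (m := m) j
  have htj0 := tp_pos (m := m) j
  rcases hp with ((⟨k, hk, rfl⟩ | ⟨k, hk, rfl⟩) | ⟨k, hk, rfl⟩) | ⟨k, hk, rfl⟩
  · have := tp_lt_one (m := m) k; have := tp_pos (m := m) k
    show 0 * (-2 + 2 * tp m k) + 1 * (-(8*(m:ℝ)) - 6 + 2 * tp m k)
        < 0 * (2 * tp m j) + 1 * (-(2 * tp m j))
    have hm0 : (0:ℝ) ≤ (m:ℝ) := Nat.cast_nonneg _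
    linarith
  · have hkj : (j : ℕ) < (k : ℕ) :=
      lt_of_le_of_ne hk (fun h => hne (congrArg (pb m) (Fin.ext h.symm)))
    have := tp_lt_tp (m := m) j k hkj
    show 0 * (2 * tp m k) + 1 * (-(2 * tp m k)) < 0 * (2 * tp m j) + 1 * (-(2 * tp m j))
    linarith
  · have := tp_pos (m := m) k
    show 0 * (8*(m:ℝ) + 2 + 2 * tp m k) + 1 * (-(8*(m:ℝ)) - 2 - 2 * tp m k)
        < 0 * (2 * tp m j) + 1 * (-(2 * tp m j))
    have hm0 : (0:ℝ) ≤ (m:ℝ) := Nat.cast_nonneg _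
    linarith
  · have := sq_lt_one σ k
    have hk1 : (1:ℝ) ≤ ((k:ℕ) + 1 : ℝ) := by
      have : (0:ℝ) ≤ ((k:ℕ):ℝ) := Nat.cast_nonneg _; linarith
    show 0 * (2 * ((k:ℕ) + 1 : ℝ) + 1 + sq m σ k) + 1 * (-(2 * ((k:ℕ) + 1 : ℝ)) - 1 + sq m σ k)
        < 0 * (2 * tp m j) + 1 * (-(2 * tp m j))
    linarith

lemma vert_c (j : Fin m) : pc m j.rev ∉ convexHull ℝ (Rem m σ (j : ℕ) \ {pc m j.rev}) := by
  apply not_mem_hull 1 0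
  rintro p ⟨hp, hne⟩
  rw [Set.mem_singleton_iff] at hne
  rcases hp with ((⟨k, hk, rfl⟩ | ⟨k, hk, rfl⟩) | ⟨k, hk, rfl⟩) | ⟨k, hk, rfl⟩
  · have h1 := pa_x_lt (m := m) k; have h2 := pc_x_gt (m := m) j.rev
    have hm0 : (0:ℝ) ≤ (m:ℝ) := Nat.cast_nonneg _
    show 1 * (pa m k).1 + 0 * (pa m k).2 < 1 * (pc m j.rev).1 + 0 * (pc m j.rev).2
    have e1 : (1:ℝ) * (pa m k).1 = (pa m k).1 := one_mul _
    have e2 : (1:ℝ) * (pc m j.rev).1 = (pc m j.rev).1 := one_mul _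
    linarith
  · have h1 := pb_x_lt (m := m) k; have h2 := pc_x_gt (m := m) j.rev
    have hm0 : (0:ℝ) ≤ (m:ℝ) := Nat.cast_nonneg _
    show 1 * (pb m k).1 + 0 * (pb m k).2 < 1 * (pc m j.rev).1 + 0 * (pc m j.rev).2
    have e1 : (1:ℝ) * (pb m k).1 = (pb m k).1 := one_mul _
    have e2 : (1:ℝ) * (pc m j.rev).1 = (pc m j.rev).1 := one_mul _
    linarith
  · have hk' : (k : ℕ) + (j : ℕ) < m := hk
    have hkj : (k : ℕ) < (j.rev : ℕ) := by
      have hne' : (k : ℕ) ≠ (j.rev : ℕ) :=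
        fun h => hne (congrArg (pc m) (Fin.ext h))
      have hj := j.isLt; rw [Fin.val_rev] at hne' ⊢; omega
    have := tp_lt_tp (m := m) k j.rev hkj
    show 1 * (8*(m:ℝ) + 2 + 2 * tp m k) + 0 * (pc m k).2
        < 1 * (8*(m:ℝ) + 2 + 2 * tp m j.rev) + 0 * (pc m j.rev).2
    linarith
  · have h1 := pq_x_lt σ k; have h2 := pc_x_gt (m := m) j.rev
    have hm1 : (1:ℝ) ≤ (m:ℝ) := by exact_mod_cast k.pos
    show 1 * (pq m σ k).1 + 0 * (pq m σ k).2 < 1 * (pc m j.rev).1 + 0 * (pc m j.rev).2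
    have e1 : (1:ℝ) * (pq m σ k).1 = (pq m σ k).1 := one_mul _
    have e2 : (1:ℝ) * (pc m j.rev).1 = (pc m j.rev).1 := one_mul _
    linarith

lemma vert_q (j : Fin m) :
    pq m σ (σ.symm j) ∉ convexHull ℝ (Rem m σ (j : ℕ) \ {pq m σ (σ.symm j)}) := by
  apply not_mem_hull 1 1
  rintro p ⟨hp, hne⟩
  rw [Set.mem_singleton_iff] at hne
  have htop : σ (σ.symm j) = j := Equiv.apply_symm_apply σ j
  have hstop : 0 < sq m σ (σ.symm j) := sq_pos σ _
  have hq : (pq m σ (σ.symm j)).1 + (pq m σ (σ.symm j)).2 = 2 * sq m σ (σ.symm j) := by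
    show 2 * (((σ.symm j : Fin m) : ℕ) + 1 : ℝ) + 1 + sq m σ (σ.symm j)
        + (-(2 * (((σ.symm j : Fin m) : ℕ) + 1 : ℝ)) - 1 + sq m σ (σ.symm j)) = _
    ring
  rcases hp with ((⟨k, hk, rfl⟩ | ⟨k, hk, rfl⟩) | ⟨k, hk, rfl⟩) | ⟨k, hk, rfl⟩
  · have := tp_lt_one (m := m) k
    have hm0 : (0:ℝ) ≤ (m:ℝ) := Nat.cast_nonneg _
    have : (pa m k).1 + (pa m k).2 < 0 := by
      show -2 + 2 * tp m k + (-(8*(m:ℝ)) - 6 + 2 * tp m k) < 0; linarith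
    show 1 * (pa m k).1 + 1 * (pa m k).2 < 1 * (pq m σ (σ.symm j)).1 + 1 * (pq m σ (σ.symm j)).2
    linarith [hq]
  · have : (pb m k).1 + (pb m k).2 = 0 := by
      show 2 * tp m k + (-(2 * tp m k)) = 0; ring
    show 1 * (pb m k).1 + 1 * (pb m k).2 < 1 * (pq m σ (σ.symm j)).1 + 1 * (pq m σ (σ.symm j)).2
    linarith [hq]
  · have : (pc m k).1 + (pc m k).2 = 0 := by
      show 8*(m:ℝ) + 2 + 2 * tp m k + (-(8*(m:ℝ)) - 2 - 2 * tp m k) = 0; ring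
    show 1 * (pc m k).1 + 1 * (pc m k).2 < 1 * (pq m σ (σ.symm j)).1 + 1 * (pq m σ (σ.symm j)).2
    linarith [hq]
  · have hkj : (j : ℕ) < (σ k : ℕ) :=
      lt_of_le_of_ne hk (by
        intro h
        exact hne (congrArg (pq m σ) (by
          have : σ k = j := Fin.ext h.symm
          rw [← this, Equiv.symm_apply_apply])))
    have hlt : sq m σ k < sq m σ (σ.symm j) := by
      rw [sq, sq, htop]
      exact pow_lt_pow_right_of_lt_one₀ eps_pos eps_lt_one (by omega)
    have : (pq m σ k).1 + (pq m σ k).2 = 2 * sq m σ k := by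
      show 2 * ((k:ℕ) + 1 : ℝ) + 1 + sq m σ k + (-(2 * ((k:ℕ) + 1 : ℝ)) - 1 + sq m σ k) = _
      ring
    show 1 * (pq m σ k).1 + 1 * (pq m σ k).2 < 1 * (pq m σ (σ.symm j)).1 + 1 * (pq m σ (σ.symm j)).2
    linarith [hq]


/-! ### Layers are exactly the hull vertices -/

lemma pa_mem_lay (j : Fin m) : pa m j ∈ lay m σ j := Or.inl rfl
lemma pb_mem_lay (j : Fin m) : pb m j ∈ lay m σ j := Or.inr (Or.inl rfl)
lemma pc_mem_lay (j : Fin m) : pc m j.rev ∈ lay m σ j := Or.inr (Or.inr (Or.inl rfl))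
lemma pq_mem_lay (j : Fin m) : pq m σ (σ.symm j) ∈ lay m σ j := Or.inr (Or.inr (Or.inr rfl))

lemma lay_subset (j : Fin m) : lay m σ j ⊆ Rem m σ (j : ℕ) := by
  have hrev : ((j.rev : ℕ) + j < m) := by have := j.isLt; rw [Fin.val_rev]; omega
  rintro p (rfl | rfl | rfl | rfl)
  · exact pa_mem_Rem σ le_rfl
  · exact pb_mem_Rem σ le_rfl
  · exact pc_mem_Rem σ hrev
  · exact pq_mem_Rem σ (by rw [Equiv.apply_symm_apply])

lemma layer_eq (j : Fin m) : hullVertices (Rem m σ (j : ℕ)) = lay m σ j := by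
  ext p
  constructor
  · rintro ⟨hpR, hph⟩
    rcases hpR with ((⟨k, hk, rfl⟩ | ⟨k, hk, rfl⟩) | ⟨k, hk, rfl⟩) | ⟨k, hk, rfl⟩
    · have hk' : (j:ℕ) ≤ (k:ℕ) := hk
      rcases eq_or_lt_of_le hk' with heq | hlt
      · exact (congrArg (pa m) (Fin.ext heq.symm) : pa m k = pa m j) ▸ pa_mem_lay σ j
      · exact absurd (nonvert_a σ hlt) (fun h => hph h)
    · have hk' : (j:ℕ) ≤ (k:ℕ) := hk
      rcases eq_or_lt_of_le hk' with heq | hlt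
      · exact (congrArg (pb m) (Fin.ext heq.symm) : pb m k = pb m j) ▸ pb_mem_lay σ j
      · exact absurd (nonvert_b σ hlt) (fun h => hph h)
    · have hk' : (k : ℕ) + (j : ℕ) < m := hk
      rcases eq_or_lt_of_le (show (k:ℕ) ≤ (j.rev:ℕ) by rw [Fin.val_rev]; omega) with heq | hlt
      · exact (congrArg (pc m) (Fin.ext heq) : pc m k = pc m j.rev) ▸ pc_mem_lay σ j
      · exact absurd (nonvert_c σ hlt) (fun h => hph h)
    · have hk' : (j:ℕ) ≤ (σ k : ℕ) := hk
      rcases eq_or_lt_of_le hk' with heq | hlt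
      · have hkk : k = σ.symm j := by
          have : σ k = j := Fin.ext heq.symm
          rw [← this, Equiv.symm_apply_apply]
        exact (congrArg (pq m σ) hkk) ▸ pq_mem_lay σ j
      · exact absurd (nonvert_q σ hlt) (fun h => hph h)
  · rintro (rfl | rfl | rfl | rfl)
    · exact ⟨lay_subset σ j (pa_mem_lay σ j), vert_a σ j⟩
    · exact ⟨lay_subset σ j (pb_mem_lay σ j), vert_b σ j⟩
    · exact ⟨lay_subset σ j (pc_mem_lay σ j), vert_c σ j⟩
    · exact ⟨lay_subset σ j (pq_mem_lay σ j), vert_q σ j⟩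

lemma notin_lay_iff {j : Fin m} {p : ℝ × ℝ} :
    p ∉ lay m σ j ↔ (p ≠ pa m j ∧ p ≠ pb m j ∧ p ≠ pc m j.rev ∧ p ≠ pq m σ (σ.symm j)) := by
  simp only [lay, Set.mem_insert_iff, Set.mem_singleton_iff, not_or]

lemma Rem_succ (j : Fin m) : Rem m σ ((j : ℕ) + 1) = Rem m σ (j : ℕ) \ lay m σ j := by
  ext p
  constructor
  · rintro (((⟨k, hk, rfl⟩ | ⟨k, hk, rfl⟩) | ⟨k, hk, rfl⟩) | ⟨k, hk, rfl⟩)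
    · have hk' : (j:ℕ) + 1 ≤ (k:ℕ) := hk
      refine ⟨pa_mem_Rem σ (by omega), (notin_lay_iff σ).2 ⟨?_, ?_, ?_, ?_⟩⟩
      · exact fun h => (by omega : (k:ℕ) ≠ (j:ℕ)) (congrArg Fin.val (pa_inj k j h))
      · exact pa_ne_pb k j
      · exact pa_ne_pc k j.rev
      · exact pa_ne_pq σ k _
    · have hk' : (j:ℕ) + 1 ≤ (k:ℕ) := hk
      refine ⟨pb_mem_Rem σ (by omega), (notin_lay_iff σ).2 ⟨?_, ?_, ?_, ?_⟩⟩
      · exact fun h => pa_ne_pb j k h.symm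
      · exact fun h => (by omega : (k:ℕ) ≠ (j:ℕ)) (congrArg Fin.val (pb_inj k j h))
      · exact pb_ne_pc k j.rev
      · exact pb_ne_pq σ k _
    · have hk' : (k:ℕ) + ((j:ℕ) + 1) < m := hk
      refine ⟨pc_mem_Rem σ (by omega), (notin_lay_iff σ).2 ⟨?_, ?_, ?_, ?_⟩⟩
      · exact fun h => pa_ne_pc j k h.symm
      · exact fun h => pb_ne_pc j k h.symm
      · refine fun h => ?_
        have := congrArg Fin.val (pc_inj k j.rev h)
        rw [Fin.val_rev] at this; omega
      · exact pc_ne_pq σ k _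
    · have hk' : (j:ℕ) + 1 ≤ (σ k : ℕ) := hk
      refine ⟨pq_mem_Rem σ (by omega), (notin_lay_iff σ).2 ⟨?_, ?_, ?_, ?_⟩⟩
      · exact fun h => pa_ne_pq σ j k h.symm
      · exact fun h => pb_ne_pq σ j k h.symm
      · exact fun h => pc_ne_pq σ j.rev k h.symm
      · refine fun h => ?_
        have hkk := pq_inj σ k _ h
        have : σ k = j := by rw [hkk, Equiv.apply_symm_apply]
        have := congrArg Fin.val this; omega
  · rintro ⟨hpR, hpl⟩
    rw [notin_lay_iff σ] at hpl
    obtain ⟨h1, h2, h3, h4⟩ := hpl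
    rcases hpR with ((⟨k, hk, rfl⟩ | ⟨k, hk, rfl⟩) | ⟨k, hk, rfl⟩) | ⟨k, hk, rfl⟩
    · have hk' : (j:ℕ) ≤ (k:ℕ) := hk
      have : (k:ℕ) ≠ (j:ℕ) := fun h => h1 (congrArg (pa m) (Fin.ext h))
      exact pa_mem_Rem σ (by omega)
    · have hk' : (j:ℕ) ≤ (k:ℕ) := hk
      have : (k:ℕ) ≠ (j:ℕ) := fun h => h2 (congrArg (pb m) (Fin.ext h))
      exact pb_mem_Rem σ (by omega)
    · have hk' : (k:ℕ) + (j:ℕ) < m := hk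
      have hne : (k:ℕ) ≠ (j.rev:ℕ) := fun h => h3 (congrArg (pc m) (Fin.ext h))
      rw [Fin.val_rev] at hne
      exact pc_mem_Rem σ (by omega)
    · have hk' : (j:ℕ) ≤ (σ k:ℕ) := hk
      have hne : (σ k : ℕ) ≠ (j:ℕ) := by
        intro h
        exact h4 (congrArg (pq m σ) (by
          have : σ k = j := Fin.ext h
          rw [← this, Equiv.symm_apply_apply]))
      exact pq_mem_Rem σ (by omega)

lemma Rem_zero : Rem m σ 0
    = Set.range (pa m) ∪ Set.range (pb m) ∪ Set.range (pc m) ∪ Set.range (pq m σ) := by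
  unfold Rem
  have h1 : {k : Fin m | 0 ≤ (k:ℕ)} = Set.univ := by ext k; simp
  have h2 : {k : Fin m | (k:ℕ) + 0 < m} = Set.univ := by ext k; simp [k.isLt]
  have h3 : {k : Fin m | 0 ≤ (σ k:ℕ)} = Set.univ := by ext k; simp
  rw [h1, h2, h3, Set.image_univ, Set.image_univ, Set.image_univ, Set.image_univ]

lemma Rem_anti {i i' : ℕ} (h : i ≤ i') : Rem m σ i' ⊆ Rem m σ i := by
  rintro p (((⟨k, hk, rfl⟩ | ⟨k, hk, rfl⟩) | ⟨k, hk, rfl⟩) | ⟨k, hk, rfl⟩)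
  · exact pa_mem_Rem σ (le_trans h hk)
  · exact pb_mem_Rem σ (le_trans h hk)
  · have hk' : (k:ℕ) + i' < m := hk
    exact pc_mem_Rem σ (by omega)
  · exact pq_mem_Rem σ (le_trans h hk)


/-! ### The onion decomposition -/

def Ldef (m : ℕ) (σ : Equiv.Perm (Fin m)) : List (Set (ℝ × ℝ)) :=
  List.ofFn (fun j : Fin m => lay m σ j)

lemma Ldef_length : (Ldef m σ).length = m := List.length_ofFn

lemma Ldef_getD {i : ℕ} (h : i < m) : (Ldef m σ).getD i ∅ = lay m σ ⟨i, h⟩ := by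
  rw [List.getD_eq_getElem _ _ (by rw [Ldef_length]; exact h)]
  simp [Ldef]

lemma cum : ∀ i, i ≤ m →
    Rem m σ i = Rem m σ 0 \ ⋃ j ∈ Finset.range i, (Ldef m σ).getD j ∅ := by
  intro i
  induction i with
  | zero => intro _; simp
  | succ i ih =>
    intro hi
    have hi' : i < m := hi
    rw [Finset.range_add_one, Finset.set_biUnion_insert, Ldef_getD σ hi']
    rw [show Rem m σ 0 \ (lay m σ ⟨i, hi'⟩ ∪ ⋃ j ∈ Finset.range i, (Ldef m σ).getD j ∅)
        = (Rem m σ 0 \ ⋃ j ∈ Finset.range i, (Ldef m σ).getD j ∅) \ lay m σ ⟨i, hi'⟩ by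
      rw [Set.diff_diff]; rw [Set.union_comm]]
    rw [← ih (by omega)]
    exact Rem_succ σ ⟨i, hi'⟩

lemma is_onion (hm : 0 < m) :
    IsOnionDecomp (Set.range (pa m) ∪ Set.range (pb m) ∪ Set.range (pc m)
      ∪ Set.range (pq m σ)) (Ldef m σ) := by
  have hP : Set.range (pa m) ∪ Set.range (pb m) ∪ Set.range (pc m) ∪ Set.range (pq m σ)
      = Rem m σ 0 := (Rem_zero σ).symm
  rw [hP]
  refine ⟨?_, ?_, ?_, ?_, ?_⟩
  · intro h
    have hl := Ldef_length (σ := σ)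
    rw [h] at hl
    simp only [List.length_nil] at hl
    omega
  · intro S hS
    rw [Ldef, List.mem_ofFn] at hS
    obtain ⟨j, rfl⟩ := hS
    exact ⟨pa m j, pa_mem_lay σ j⟩
  · rw [Ldef, List.pairwise_ofFn]
    intro i j hij
    rw [Set.disjoint_left]
    intro x hxi hxj
    have h1 : x ∈ Rem m σ ((j : ℕ)) := lay_subset σ j hxj
    have h2 : x ∈ Rem m σ ((i : ℕ) + 1) := Rem_anti σ (by exact_mod_cast hij) h1
    rw [Rem_succ σ i] at h2
    exact h2.2 hxi
  · ext p
    constructor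
    · rintro ⟨S, hS, hpS⟩
      have hS' : S ∈ Ldef m σ := hS
      rw [Ldef, List.mem_ofFn] at hS'
      obtain ⟨j, rfl⟩ := hS'
      exact Rem_anti σ (Nat.zero_le _) (lay_subset σ j hpS)
    · rintro (((⟨k, -, rfl⟩ | ⟨k, -, rfl⟩) | ⟨k, -, rfl⟩) | ⟨k, -, rfl⟩)
      · exact ⟨lay m σ k, (by rw [Ldef, List.mem_ofFn]; exact ⟨k, rfl⟩ : lay m σ k ∈ Ldef m σ),
          pa_mem_lay σ k⟩
      · exact ⟨lay m σ k, (by rw [Ldef, List.mem_ofFn]; exact ⟨k, rfl⟩ : lay m σ k ∈ Ldef m σ),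
          pb_mem_lay σ k⟩
      · refine ⟨lay m σ k.rev, (by show lay m σ k.rev ∈ Ldef m σ; rw [Ldef, List.mem_ofFn]; exact ⟨k.rev, rfl⟩ : lay m σ k.rev ∈ Ldef m σ), ?_⟩
        have := pc_mem_lay σ k.rev
        rwa [Fin.rev_rev] at this
      · refine ⟨lay m σ (σ k), (by show lay m σ (σ k) ∈ Ldef m σ; rw [Ldef, List.mem_ofFn]; exact ⟨σ k, rfl⟩ : lay m σ (σ k) ∈ Ldef m σ), ?_⟩
        have := pq_mem_lay σ (σ k)
        rwa [Equiv.symm_apply_apply] at this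
  · intro i hi
    rw [Ldef_length] at hi
    rw [Ldef_getD σ hi, ← cum σ i (le_of_lt hi)]
    exact (layer_eq σ ⟨i, hi⟩).symm


/-! ### Family membership -/

lemma mem_open_seg (x y p : ℝ × ℝ) (θ : ℝ) (h0 : 0 < θ) (h1 : θ < 1)
    (hx : p.1 = (1 - θ) * x.1 + θ * y.1) (hy : p.2 = (1 - θ) * x.2 + θ * y.2) :
    p ∈ openSegment ℝ x y := by
  refine ⟨1 - θ, θ, by linarith, h0, by ring, ?_⟩
  apply Prod.ext <;> simp [Prod.smul_fst, Prod.smul_snd, smul_eq_mul]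
  · exact hx.symm
  · exact hy.symm

lemma in_family {n : ℕ} (hn : n = 4 * m) :
    InFamilyF n m (pa m) (pb m) (pc m) (pq m σ) := by
  have hnr : ((n : ℕ) : ℝ) = 4 * (m : ℝ) := by rw [hn]; push_cast; ring
  refine ⟨?_, ?_, ?_, ?_, ?_, ?_, ?_⟩
  · intro i
    have h0 := tp_pos (m := m) i; have h1 := tp_lt_one (m := m) i
    apply mem_open_seg _ _ _ (tp m i) h0 h1
    · show -2 + 2 * tp m i = (1 - tp m i) * (-2) + tp m i * 0; ring
    · show -(8*(m:ℝ)) - 6 + 2 * tp m i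
          = (1 - tp m i) * (-2 * (n:ℝ) - 6) + tp m i * (-2 * (n:ℝ) - 4)
      rw [hnr]; ring
  · intro i j hij
    have := tp_lt_tp (m := m) i j hij
    show -2 + 2 * tp m i < -2 + 2 * tp m j; linarith
  · intro i
    have h0 := tp_pos (m := m) i; have h1 := tp_lt_one (m := m) i
    apply mem_open_seg _ _ _ (tp m i) h0 h1
    · show 2 * tp m i = (1 - tp m i) * 0 + tp m i * 2; ring
    · show -(2 * tp m i) = (1 - tp m i) * 0 + tp m i * (-2); ring
  · intro i j hij
    have := tp_lt_tp (m := m) i j hij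
    show 2 * tp m i < 2 * tp m j; linarith
  · intro i
    have h0 := tp_pos (m := m) i; have h1 := tp_lt_one (m := m) i
    apply mem_open_seg _ _ _ (tp m i) h0 h1
    · show 8*(m:ℝ) + 2 + 2 * tp m i
          = (1 - tp m i) * (2 * (n:ℝ) + 2) + tp m i * (2 * (n:ℝ) + 4)
      rw [hnr]; ring
    · show -(8*(m:ℝ)) - 2 - 2 * tp m i
          = (1 - tp m i) * (-2 * (n:ℝ) - 2) + tp m i * (-2 * (n:ℝ) - 4)
      rw [hnr]; ring
  · intro i j hij
    have := tp_lt_tp (m := m) i j hij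
    show 8*(m:ℝ) + 2 + 2 * tp m i < 8*(m:ℝ) + 2 + 2 * tp m j; linarith
  · intro i
    have h0 := sq_pos σ i; have h1 := sq_lt_one σ i
    apply mem_open_seg _ _ _ (sq m σ i) h0 h1
    · show 2 * ((i:ℕ) + 1 : ℝ) + 1 + sq m σ i
          = (1 - sq m σ i) * (2 * ((i:ℕ) + 1 : ℝ) + 1) + sq m σ i * (2 * ((i:ℕ) + 1 : ℝ) + 2)
      ring
    · show -(2 * ((i:ℕ) + 1 : ℝ)) - 1 + sq m σ i
          = (1 - sq m σ i) * (-(2 * ((i:ℕ) + 1 : ℝ)) - 1) + sq m σ i * (-(2 * ((i:ℕ) + 1 : ℝ)))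
      ring

/-! ### The index form -/

def ISet (m : ℕ) (σ : Equiv.Perm (Fin m)) (j : Fin m) : Set ℕ :=
  {(j : ℕ), m + (j : ℕ), 2*m + (j.rev : ℕ), 3*m + ((σ.symm j : Fin m) : ℕ)}

lemma pts_getD_a {idx : ℕ} (h : idx < m) :
    (familyFList m (pa m) (pb m) (pc m) (pq m σ)).getD idx ((0:ℝ),(0:ℝ))
      = pa m ⟨idx, h⟩ := by
  rw [familyFList, List.getD_eq_getElem?_getD]
  simp [List.getElem?_append, List.length_ofFn, List.length_append, List.getElem?_ofFn,
    List.ofFnNthVal, h]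

lemma pts_getD_b {idx : ℕ} (h1 : m ≤ idx) (h2 : idx < 2*m) :
    (familyFList m (pa m) (pb m) (pc m) (pq m σ)).getD idx ((0:ℝ),(0:ℝ))
      = pb m ⟨idx - m, by omega⟩ := by
  rw [familyFList, List.getD_eq_getElem?_getD]
  simp [List.getElem?_append, List.length_ofFn, List.length_append, List.getElem?_ofFn,
    List.ofFnNthVal, show ¬ idx < m by omega, show idx - m < m by omega,
    show idx < m + m by omega]

lemma pts_getD_c {idx : ℕ} (h1 : 2*m ≤ idx) (h2 : idx < 3*m) :
    (familyFList m (pa m) (pb m) (pc m) (pq m σ)).getD idx ((0:ℝ),(0:ℝ))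
      = pc m ⟨idx - m - m, by omega⟩ := by
  rw [familyFList, List.getD_eq_getElem?_getD]
  simp [List.getElem?_append, List.length_ofFn, List.length_append, List.getElem?_ofFn,
    List.ofFnNthVal, show ¬ idx < m by omega, show ¬ idx - m < m by omega,
    show idx < m + m + m by omega, show idx - m - m < m by omega]

lemma pts_getD_q {idx : ℕ} (h1 : 3*m ≤ idx) (h2 : idx < 4*m) :
    (familyFList m (pa m) (pb m) (pc m) (pq m σ)).getD idx ((0:ℝ),(0:ℝ))
      = pq m σ ⟨idx - m - m - m, by omega⟩ := by
  rw [familyFList, List.getD_eq_getElem?_getD]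
  simp [List.getElem?_append, List.length_ofFn, List.length_append, List.getElem?_ofFn,
    List.ofFnNthVal, show ¬ idx < m by omega, show ¬ idx - m < m by omega,
    show ¬ idx < m + m + m by omega, show ¬ idx - m - m < m by omega,
    show idx - m - m - m < m by omega]

lemma indexSet_eq (j : Fin m) :
    {idx : ℕ | idx < 4 * m ∧
        (familyFList m (pa m) (pb m) (pc m) (pq m σ)).getD idx ((0:ℝ),(0:ℝ)) ∈ lay m σ j}
      = ISet m σ j := by
  have hjm := j.isLt
  have hrev := j.rev.isLt
  have hsym := (σ.symm j).isLt
  ext idx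
  simp only [Set.mem_setOf_eq, ISet, Set.mem_insert_iff, Set.mem_singleton_iff]
  constructor
  · rintro ⟨h4, hmem⟩
    rcases Nat.lt_or_ge idx m with h | h
    · rw [pts_getD_a σ h] at hmem
      rcases hmem with he | he | he | he
      · left; have := congrArg Fin.val (pa_inj _ _ he); simpa using this
      · exact absurd he (pa_ne_pb _ _)
      · exact absurd he (pa_ne_pc _ _)
      · exact absurd he (pa_ne_pq σ _ _)
    rcases Nat.lt_or_ge idx (2*m) with h2 | h2
    · rw [pts_getD_b σ h h2] at hmem
      rcases hmem with he | he | he | he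
      · exact absurd he.symm (pa_ne_pb _ _)
      · right; left
        have := congrArg Fin.val (pb_inj _ _ he); simp at this; omega
      · exact absurd he (pb_ne_pc _ _)
      · exact absurd he (pb_ne_pq σ _ _)
    rcases Nat.lt_or_ge idx (3*m) with h3 | h3
    · rw [pts_getD_c σ h2 h3] at hmem
      rcases hmem with he | he | he | he
      · exact absurd he.symm (pa_ne_pc _ _)
      · exact absurd he.symm (pb_ne_pc _ _)
      · right; right; left
        have hval := congrArg Fin.val (pc_inj _ _ he)
        simp only [Fin.val_rev] at hval ⊢
        omega
      · exact absurd he (pc_ne_pq σ _ _)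
    · rw [pts_getD_q σ h3 h4] at hmem
      rcases hmem with he | he | he | he
      · exact absurd he.symm (pa_ne_pq σ _ _)
      · exact absurd he.symm (pb_ne_pq σ _ _)
      · exact absurd he.symm (pc_ne_pq σ _ _)
      · right; right; right
        have := congrArg Fin.val (pq_inj σ _ _ he); simp at this; omega
  · rintro (rfl | rfl | rfl | rfl)
    · refine ⟨by omega, ?_⟩
      rw [pts_getD_a σ hjm]
      have : (⟨(j:ℕ), hjm⟩ : Fin m) = j := Fin.ext rfl
      rw [this]; exact pa_mem_lay σ j
    · refine ⟨by omega, ?_⟩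
      rw [pts_getD_b σ (by omega) (by omega)]
      have : (⟨m + (j:ℕ) - m, by omega⟩ : Fin m) = j := Fin.ext (by simp)
      rw [this]; exact pb_mem_lay σ j
    · refine ⟨by omega, ?_⟩
      rw [pts_getD_c σ (by omega) (by omega)]
      have : (⟨2*m + (j.rev:ℕ) - m - m, by omega⟩ : Fin m) = j.rev := Fin.ext (by simp; omega)
      rw [this]; exact pc_mem_lay σ j
    · refine ⟨by omega, ?_⟩
      rw [pts_getD_q σ (by omega) (by omega)]
      have : (⟨3*m + ((σ.symm j : Fin m):ℕ) - m - m - m, by omega⟩ : Fin m) = σ.symm j :=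
        Fin.ext (by simp; omega)
      rw [this]; exact pq_mem_lay σ j

lemma index_eq :
    indexForm m (pa m) (pb m) (pc m) (pq m σ) (Ldef m σ)
      = List.ofFn (fun j => ISet m σ j) := by
  rw [indexForm, Ldef, List.map_ofFn]
  congr 1
  funext j
  exact indexSet_eq σ j

lemma inj_map :
    Function.Injective
      (fun σ : Equiv.Perm (Fin m) => List.ofFn (fun j => ISet m σ j)) := by
  intro σ σ' h
  simp only [List.ofFn_inj] at h
  have hsym : ∀ j, σ.symm j = σ'.symm j := by
    intro j
    have hj : ISet m σ j = ISet m σ' j := congrFun h j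
    have hmem : 3*m + ((σ.symm j : Fin m) : ℕ) ∈ ISet m σ' j := by
      rw [← hj]; right; right; right; rfl
    have hjm := j.isLt
    have hrev := j.rev.isLt
    have hs := (σ.symm j).isLt
    have hs' := (σ'.symm j).isLt
    rcases hmem with he | he | he | he
    · omega
    · omega
    · omega
    · have he' : 3*m + ((σ.symm j : Fin m) : ℕ) = 3*m + ((σ'.symm j : Fin m) : ℕ) := he
      exact Fin.ext (by omega)
  have h2 : σ.symm = σ'.symm := Equiv.ext hsym
  have := congrArg Equiv.symm h2
  rwa [Equiv.symm_symm, Equiv.symm_symm] at this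

end Layers

end OnionAux

/-- At least `(n/4)!` distinct index-form combinatorial onion layer decompositions arise
from members of the family `F_n`. -/
theorem familyF_many_onion_decompositions
    (n m : ℕ) (hm : 0 < m) (hn : n = 4 * m) :
    ∃ T : Finset (List (Set ℕ)),
      Nat.factorial m ≤ T.card ∧
      ∀ IL ∈ T, ∃ (p1 p2 p3 q : Fin m → ℝ × ℝ) (L : List (Set (ℝ × ℝ))),
        InFamilyF n m p1 p2 p3 q ∧
        IsOnionDecomp (Set.range p1 ∪ Set.range p2 ∪ Set.range p3 ∪ Set.range q) L ∧
        IL = indexForm m p1 p2 p3 q L := by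
  classical
  refine ⟨Finset.image
      (fun σ : Equiv.Perm (Fin m) => List.ofFn (fun j => OnionAux.ISet m σ j))
      Finset.univ, ?_, ?_⟩
  · rw [Finset.card_image_of_injective _ OnionAux.inj_map, Finset.card_univ,
      Fintype.card_perm, Fintype.card_fin]
  · intro IL hIL
    rw [Finset.mem_image] at hIL
    obtain ⟨σ, -, rfl⟩ := hIL
    exact ⟨OnionAux.pa m, OnionAux.pb m, OnionAux.pc m, OnionAux.pq m σ,
      OnionAux.Ldef m σ, OnionAux.in_family σ hn, OnionAux.is_onion σ hm,
      (OnionAux.index_eq σ).symm⟩
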